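/- Let T denote the matrix with rows (1,0) and (2,1), an element of SL(2,ℤ). Let p = (a,b) and q = (c,d) be primitive vectors in ℤ² (i.e., gcd(a,b) = 1 and gcd(c,d) = 1) such that |ad − bc| = 2. Then there exist a matrix M in SL(2,ℤ) and signs ε, η ∈ {1, −1} such that M·p = (1,0) and (M⁻¹ · Tᵉ · M)·p = η·q, where Tᵉ denotes T when ε = 1 and T⁻¹ when ε = −1. -/

import Mathlib

def Tmat : Matrix.SpecialLinearGroup (Fin 2) ℤ :=
  ⟨!![1, 0; 2, 1], by simp [Matrix.det_fin_two_of]⟩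

lemma parity_key : ∀ x y z w : ZMod 2, ¬(x = 0 ∧ y = 0) → ¬(z = 0 ∧ w = 0) →
    x * w - y * z = 0 → x = z ∧ y = w := by decide

lemma key_mat (a b c d x y s : ℤ) (hdet1 : a * x + b * y = 1)
    (hy : a - c = 2 * s * y) (hx : d - b = 2 * s * x) :
    (!![a, -y; b, x] * !![1, 0; 2*s, 1] * !![x, y; -b, a]).mulVec ![a, b] = ![c, d] := by
  funext i
  fin_cases i <;>
    simp [Matrix.mulVec, dotProduct, Matrix.mul_apply, Fin.sum_univ_two]
  · linear_combination (a - 2*s*y) * hdet1 + hy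
  · linear_combination (b + 2*s*x) * hdet1 - hx

lemma build (a b c d x y s : ℤ) (hs : s = 1 ∨ s = -1) (hdet1 : a * x + b * y = 1)
    (hy : a - c = 2 * s * y) (hx : d - b = 2 * s * x) :
    ∃ (M : Matrix.SpecialLinearGroup (Fin 2) ℤ) (ε η : ℤ),
      (ε = 1 ∨ ε = -1) ∧ (η = 1 ∨ η = -1) ∧
      (M : Matrix (Fin 2) (Fin 2) ℤ).mulVec ![a, b] = ![1, 0] ∧
      ((M⁻¹ * Tmat ^ ε * M : Matrix.SpecialLinearGroup (Fin 2) ℤ) :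
          Matrix (Fin 2) (Fin 2) ℤ).mulVec ![a, b] = η • ![c, d] := by
  have hdetM : (!![x, y; -b, a]).det = 1 := by
    rw [Matrix.det_fin_two_of]; linear_combination hdet1
  set M : Matrix.SpecialLinearGroup (Fin 2) ℤ := ⟨!![x, y; -b, a], hdetM⟩ with hM
  refine ⟨M, s, 1, hs, Or.inl rfl, ?_, ?_⟩
  · funext i; fin_cases i <;>
      simp [hM, Matrix.mulVec, dotProduct, Fin.sum_univ_two]
    · linear_combination hdet1
    · ring
  · have hcoe : ((M⁻¹ * Tmat ^ s * M :
          Matrix.SpecialLinearGroup (Fin 2) ℤ) : Matrix (Fin 2) (Fin 2) ℤ) =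
        !![a, -y; b, x] * !![1, 0; 2*s, 1] * !![x, y; -b, a] := by
      rcases hs with rfl | rfl
      · rw [zpow_one, Matrix.SpecialLinearGroup.coe_mul, Matrix.SpecialLinearGroup.coe_mul, Matrix.SpecialLinearGroup.coe_inv]
        simp [hM, Tmat, Matrix.SpecialLinearGroup.coe_inv, Matrix.adjugate_fin_two_of]
      · rw [zpow_neg_one, Matrix.SpecialLinearGroup.coe_mul, Matrix.SpecialLinearGroup.coe_mul, Matrix.SpecialLinearGroup.coe_inv, Matrix.SpecialLinearGroup.coe_inv]
        simp [hM, Tmat, Matrix.SpecialLinearGroup.coe_inv, Matrix.adjugate_fin_two_of]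
    rw [hcoe]
    simpa using key_mat a b c d x y s hdet1 hy hx

/-- If `p = (a,b)` and `q = (c,d)` are primitive vectors in `ℤ²` with
`|ad - bc| = 2`, then there are `M ∈ SL(2,ℤ)` and signs `ε, η ∈ {1, -1}` such that
`M·p = (1,0)` and `(M⁻¹ · Tᵉ · M)·p = η·q`, where `T` has rows `(1,0)` and `(2,1)`. -/
theorem stmt_3 (a b c d : ℤ) (hp : Int.gcd a b = 1) (hq : Int.gcd c d = 1)
    (h : |a * d - b * c| = 2) :
    ∃ (M : Matrix.SpecialLinearGroup (Fin 2) ℤ) (ε η : ℤ),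
      (ε = 1 ∨ ε = -1) ∧ (η = 1 ∨ η = -1) ∧
      (M : Matrix (Fin 2) (Fin 2) ℤ).mulVec ![a, b] = ![1, 0] ∧
      ((M⁻¹ * Tmat ^ ε * M : Matrix.SpecialLinearGroup (Fin 2) ℤ) :
          Matrix (Fin 2) (Fin 2) ℤ).mulVec ![a, b] = η • ![c, d] := by
  have hA : ¬((a : ZMod 2) = 0 ∧ (b : ZMod 2) = 0) := by
    rintro ⟨h1, h2⟩
    rw [ZMod.intCast_zmod_eq_zero_iff_dvd] at h1 h2
    have : (2 : ℤ) ∣ (Int.gcd a b : ℤ) := Int.dvd_coe_gcd (by exact_mod_cast h1) (by exact_mod_cast h2)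
    rw [hp] at this; norm_num at this
  have hB : ¬((c : ZMod 2) = 0 ∧ (d : ZMod 2) = 0) := by
    rintro ⟨h1, h2⟩
    rw [ZMod.intCast_zmod_eq_zero_iff_dvd] at h1 h2
    have : (2 : ℤ) ∣ (Int.gcd c d : ℤ) := Int.dvd_coe_gcd (by exact_mod_cast h1) (by exact_mod_cast h2)
    rw [hq] at this; norm_num at this
  have hdvd : (2 : ℤ) ∣ a * d - b * c := by
    rcases (abs_eq (by norm_num : (0:ℤ) ≤ 2)).mp h with h' | h' <;> simp [h']
  have hC : ((a : ZMod 2)) * d - (b : ZMod 2) * c = 0 := by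
    have : ((a * d - b * c : ℤ) : ZMod 2) = 0 := by
      rw [ZMod.intCast_zmod_eq_zero_iff_dvd]; exact_mod_cast hdvd
    push_cast at this
    linear_combination this
  obtain ⟨hac, hbd⟩ := parity_key _ _ _ _ hA hB hC
  have hac' : (2 : ℤ) ∣ a - c := by
    have h0 : ((a - c : ℤ) : ZMod 2) = 0 := by push_cast; rw [hac]; ring
    exact_mod_cast (ZMod.intCast_zmod_eq_zero_iff_dvd _ 2).mp h0
  have hbd' : (2 : ℤ) ∣ d - b := by
    have h0 : ((d - b : ℤ) : ZMod 2) = 0 := by push_cast; rw [hbd]; ring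
    exact_mod_cast (ZMod.intCast_zmod_eq_zero_iff_dvd _ 2).mp h0
  obtain ⟨y0, hy0⟩ := hac'
  obtain ⟨x0, hx0⟩ := hbd'
  rcases (abs_eq (by norm_num : (0:ℤ) ≤ 2)).mp h with hdet | hdet
  · have hdet1 : a * x0 + b * y0 = 1 := by
      have h2 : 2 * (a * x0 + b * y0) = 2 * 1 := by
        linear_combination -a * hx0 - b * hy0 + hdet
      exact mul_left_cancel₀ (by norm_num) h2
    exact build a b c d x0 y0 1 (Or.inl rfl) hdet1 (by linarith) (by linarith)
  · have hdet1 : a * (-x0) + b * (-y0) = 1 := by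
      have h2 : 2 * (a * (-x0) + b * (-y0)) = 2 * 1 := by
        linear_combination a * hx0 + b * hy0 - hdet
      exact mul_left_cancel₀ (by norm_num) h2
    exact build a b c d (-x0) (-y0) (-1) (Or.inr rfl) hdet1 (by linarith) (by linarith)
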